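/- Let r = 3 and 2βμ ≥ 1. Along the weak solution u of the 3D CBF equations with f ∈ H, d/dt‖u(t)‖_V² + (μ - 1/(2β))‖Au(t)‖_H² + β‖∇|u|²‖_{L²}² ≤ (1/μ)‖f‖_H². -/

import Mathlib

open MeasureTheory Real
noncomputable section

/-- Euclidean 3-space, used both as the periodic box parametrization and target. -/
abbrev E3 := EuclideanSpace ℝ (Fin 3)

/-- The fundamental domain `[0,L]³` of the torus `T³`. -/
def box (L : ℝ) : Set E3 := {x | ∀ i, x i ∈ Set.Icc (0 : ℝ) L}

/-- The standard basis vector `e_i`. -/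
def e3 (i : Fin 3) : E3 := EuclideanSpace.single i 1

/-- `u` is `L`-periodic in each coordinate direction. -/
def Periodic3 (L : ℝ) {α : Type*} (u : E3 → α) : Prop :=
  ∀ (x : E3) (i : Fin 3), u (x + L • e3 i) = u x

/-- `|∇u|² = Σ_{i,j} (∂u_j/∂x_i)²`. -/
def gradNormSq (u : E3 → E3) (x : E3) : ℝ :=
  ∑ i, ∑ j, (fderiv ℝ u x (e3 i) j) ^ 2

/-- `|∇f|²` for a scalar function. -/
def gradNormSqScalar (f : E3 → ℝ) (x : E3) : ℝ :=
  ∑ i, (fderiv ℝ f x (e3 i)) ^ 2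

/-- `u` is divergence free. -/
def divFree (u : E3 → E3) : Prop := ∀ x, ∑ i, fderiv ℝ u x (e3 i) i = 0

/-- The Laplacian `Δu`. -/
def lap (u : E3 → E3) (x : E3) : E3 :=
  ∑ i, fderiv ℝ (fun y => fderiv ℝ u y (e3 i)) x (e3 i)

/-- The Navier–Stokes trilinear form `b(u,v,w) = ∫ (u·∇)v·w`. -/
def triB (L : ℝ) (u v w : E3 → E3) : ℝ :=
  ∫ x in box L, ∑ i, ∑ j, u x i * fderiv ℝ v x (e3 i) j * w x j

/-- The `L^p` norm over the fundamental domain (for a real exponent `p`). -/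
def LpNorm (L p : ℝ) (u : E3 → E3) : ℝ := (∫ x in box L, ‖u x‖ ^ p) ^ (1 / p)

/-- The square of the `V`-norm, `‖u‖_V² = ∫ |∇u|²`. -/
def VnormSq (L : ℝ) (u : E3 → E3) : ℝ := ∫ x in box L, gradNormSq u x

/-- The `V`-norm `‖u‖_V = ‖∇u‖_{L²}`. -/
def Vnorm (L : ℝ) (u : E3 → E3) : ℝ := Real.sqrt (VnormSq L u)

/-- `‖Au‖_H² = ∫ |Δu|²` (on the torus, for divergence-free `u`, `Au = -Δu`). -/
def AuSq (L : ℝ) (u : E3 → E3) : ℝ := ∫ x in box L, ‖lap u x‖ ^ 2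

/-- The convective term `((u·∇)u)_j`. -/
def conv (u : E3 → E3) (x : E3) (j : Fin 3) : ℝ := ∑ i, u x i * fderiv ℝ u x (e3 i) j

/-- The pairing `(B(u), Au) = ∫ (u·∇)u · (-Δu)`. -/
def pairBA (L : ℝ) (u : E3 → E3) : ℝ :=
  ∫ x in box L, ∑ j, conv u x j * (-(lap u x)) j

/-- The pairing `(C(u), Au) = ∫ |u|^{r-1}u · (-Δu)`. -/
def pairCA (L r : ℝ) (u : E3 → E3) : ℝ :=
  ∫ x in box L, ∑ j, (‖u x‖ ^ (r - 1) * u x j) * (-(lap u x)) j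

/-- The pairing `(f, Au) = ∫ f · (-Δu)`. -/
def pairFA (L : ℝ) (f u : E3 → E3) : ℝ :=
  ∫ x in box L, ∑ j, f x j * (-(lap u x)) j

/-- `‖|∇u||u|^{(r-1)/2}‖_{L²}² = ∫ |∇u|²|u|^{r-1}`. -/
def I1 (L r : ℝ) (u : E3 → E3) : ℝ :=
  ∫ x in box L, gradNormSq u x * ‖u x‖ ^ (r - 1)

/-- `‖∇(|u|^{(r+1)/2})‖_{L²}²`. -/
def I2 (L r : ℝ) (u : E3 → E3) : ℝ :=
  ∫ x in box L, gradNormSqScalar (fun y => ‖u y‖ ^ ((r + 1) / 2)) x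

/-- `‖f‖_H² = ∫ |f|²`. -/
def HSq (L : ℝ) (f : E3 → E3) : ℝ := ∫ x in box L, ‖f x‖ ^ 2


/-! ### Auxiliary lemmas -/

section Aux

lemma box_eq (L : ℝ) : box L =
    (EuclideanSpace.equiv (Fin 3) ℝ) ⁻¹' (Set.Icc (0 : Fin 3 → ℝ) (fun _ => L)) := by
  ext x
  simp [box, Set.mem_Icc, Pi.le_def, forall_and]

lemma box_compact (L : ℝ) : IsCompact (box L) := by
  rw [box_eq]
  exact (EuclideanSpace.equiv (Fin 3) ℝ).toHomeomorph.isCompact_preimage.mpr isCompact_Icc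

lemma box_meas (L : ℝ) : MeasurableSet (box L) := by
  rw [box_eq]
  exact measurableSet_Icc.preimage (EuclideanSpace.equiv (Fin 3) ℝ).continuous.measurable

lemma cont_integrableOn {L : ℝ} {g : E3 → ℝ} (hg : Continuous g) :
    IntegrableOn g (box L) := hg.continuousOn.integrableOn_compact (box_compact L)

lemma fderiv_comp_proj {F : Type*} [NormedAddCommGroup F] [NormedSpace ℝ F]
    (v : F → E3) {x : F} (hv : DifferentiableAt ℝ v x) (j : Fin 3) (w : F) :
    fderiv ℝ (fun y => v y j) x w = (fderiv ℝ v x w) j := by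
  have h : HasFDerivAt (fun y => v y j)
      ((EuclideanSpace.proj j : E3 →L[ℝ] ℝ).comp (fderiv ℝ v x)) x := by
    have h0 := (EuclideanSpace.proj j).hasFDerivAt.comp x hv.hasFDerivAt
    have he : (fun y => v y j) = (EuclideanSpace.proj j : E3 →L[ℝ] ℝ) ∘ v := rfl
    rw [he]; exact h0
  rw [h.fderiv]; rfl

lemma fderiv_translate {F : Type*} [NormedAddCommGroup F] [NormedSpace ℝ F]
    (v : E3 → F) (hv : Differentiable ℝ v) (c : E3) (h : ∀ y, v (y + c) = v y) (x : E3) :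
    fderiv ℝ v (x + c) = fderiv ℝ v x := by
  have h1 : HasFDerivAt (fun y => v (y + c)) ((fderiv ℝ v (x + c)).comp
      (ContinuousLinearMap.id ℝ E3)) x :=
    (hv (x + c)).hasFDerivAt.comp x ((hasFDerivAt_id x).add_const c)
  have h2 : (fun y => v (y + c)) = v := funext h
  rw [h2] at h1
  rw [h1.fderiv, ContinuousLinearMap.comp_id]

lemma integral_deriv_sum_zero (L : ℝ) (hL : 0 < L) (φ : Fin 3 → E3 → ℝ)
    (hφ : ∀ i, ContDiff ℝ (⊤ : ℕ∞) (φ i)) (hp : ∀ i, Periodic3 L (φ i)) :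
    (∫ x in box L, ∑ i, fderiv ℝ (φ i) x (e3 i)) = 0 := by
  set Jm : (Fin 3 → ℝ) ≃L[ℝ] E3 := (EuclideanSpace.equiv (Fin 3) ℝ).symm with hJm
  have hJcoe : ⇑(MeasurableEquiv.toLp 2 (Fin 3 → ℝ)).symm.symm = ⇑Jm := rfl
  have hpre : (⇑(MeasurableEquiv.toLp 2 (Fin 3 → ℝ)).symm.symm) ⁻¹' (box L)
      = Set.Icc (0 : Fin 3 → ℝ) (fun _ => L) := by
    ext y
    constructor
    · intro hy
      rw [Set.mem_Icc]
      constructor <;> intro i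
      · exact (hy i).1
      · exact (hy i).2
    · intro hy i
      rw [Set.mem_Icc] at hy
      exact ⟨hy.1 i, hy.2 i⟩
  have htrans := (EuclideanSpace.volume_preserving_symm_measurableEquiv_toLp (Fin 3)).symm _ |>.setIntegral_preimage_emb
    (MeasurableEquiv.toLp 2 (Fin 3 → ℝ)).symm.symm.measurableEmbedding
    (fun x => ∑ i, fderiv ℝ (φ i) x (e3 i)) (box L)
  rw [hpre] at htrans
  simp only [hJcoe] at htrans
  rw [← htrans]
  have hle : (0 : Fin 3 → ℝ) ≤ fun _ => L := fun i => le_of_lt hL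
  have hdiff : ∀ i, Differentiable ℝ (φ i) := fun i => (hφ i).differentiable (by simp)
  have hder : ∀ (i : Fin 3) (y : Fin 3 → ℝ),
      HasFDerivAt (fun z => φ i (Jm z)) ((fderiv ℝ (φ i) (Jm y)).comp
        (Jm : (Fin 3 → ℝ) →L[ℝ] E3)) y :=
    fun i y => ((hdiff i (Jm y)).hasFDerivAt).comp y (Jm.hasFDerivAt)
  have hcontd : ∀ i : Fin 3, Continuous fun y : Fin 3 → ℝ => fderiv ℝ (φ i) (Jm y) (e3 i) :=
    fun i => (((hφ i).fderiv_right (m := (⊤ : ℕ∞)) (by simp)).continuous.comp Jm.continuous).clm_apply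
      continuous_const
  have key := MeasureTheory.integral_divergence_of_hasFDerivAt_off_countable'
    (a := (0 : Fin 3 → ℝ)) (b := fun _ => L) hle
    (fun i y => φ i (Jm y))
    (fun i y => (fderiv ℝ (φ i) (Jm y)).comp (Jm : (Fin 3 → ℝ) →L[ℝ] E3))
    ∅ Set.countable_empty
    (fun i => ((hφ i).continuous.comp Jm.continuous).continuousOn)
    (fun x _ i => hder i x)
    (by
      apply Continuous.integrableOn_Icc
      exact continuous_finset_sum _ fun i _ => hcontd i)
  have hfix : (fun y : Fin 3 → ℝ => ∑ i, ((fderiv ℝ (φ i) (Jm y)).comp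
      (Jm : (Fin 3 → ℝ) →L[ℝ] E3)) (Pi.single i 1))
      = fun y => ∑ i, fderiv ℝ (φ i) (Jm y) (e3 i) := rfl
  rw [hfix] at key
  have hins : ∀ (i : Fin 3) (z : Fin 2 → ℝ),
      Jm (i.insertNth L z) = Jm (i.insertNth 0 z) + L • e3 i := by
    intro i z
    apply (EuclideanSpace.equiv (Fin 3) ℝ).injective
    rw [map_add, _root_.map_smul, hJm, ContinuousLinearEquiv.apply_symm_apply,
      ContinuousLinearEquiv.apply_symm_apply]
    funext j
    have he3 : (EuclideanSpace.equiv (Fin 3) ℝ) (e3 i) = Pi.single i 1 := rfl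
    rw [he3]
    simp only [Pi.add_apply, Pi.smul_apply, smul_eq_mul]
    rcases eq_or_ne j i with rfl | hj
    · simp
    · obtain ⟨k, rfl⟩ := Fin.exists_succAbove_eq hj
      simp [Fin.insertNth_apply_succAbove, Pi.single_eq_of_ne (Fin.succAbove_ne i k)]
  have hzero : ∀ i : Fin 3,
      ((∫ z in Set.Icc ((0:Fin 3 → ℝ) ∘ i.succAbove) ((fun _ => L) ∘ i.succAbove),
          φ i (Jm (i.insertNth ((fun _ => L : Fin 3 → ℝ) i) z))) -
        ∫ z in Set.Icc ((0:Fin 3 → ℝ) ∘ i.succAbove) ((fun _ => L) ∘ i.succAbove),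
          φ i (Jm (i.insertNth ((0 : Fin 3 → ℝ) i) z))) = 0 := by
    intro i
    rw [sub_eq_zero]
    apply integral_congr_ae
    filter_upwards with z
    show φ i (Jm (i.insertNth L z)) = φ i (Jm (i.insertNth 0 z))
    rw [hins i z, hp i _ i]
  rw [key]
  exact Finset.sum_eq_zero fun i _ => hzero i

/-! ### Pointwise calculus -/

def Uc (u : E3 → E3) (j : Fin 3) : E3 → ℝ := fun x => u x j
def pc (u : E3 → E3) (i j : Fin 3) : E3 → ℝ := fun x => fderiv ℝ u x (e3 i) j
def qf (u : E3 → E3) : E3 → ℝ := fun x => ∑ j, u x j * u x j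
def Sf (u : E3 → E3) (i : Fin 3) : E3 → ℝ := fun x => ∑ j, u x j * pc u i j x
def psif (u : E3 → E3) (i : Fin 3) : E3 → ℝ := fun x => qf u x * Sf u i x

variable {u : E3 → E3}

lemma contU (hu : ContDiff ℝ (⊤ : ℕ∞) u) (j : Fin 3) : ContDiff ℝ (⊤ : ℕ∞) (Uc u j) :=
  (EuclideanSpace.proj j : E3 →L[ℝ] ℝ).contDiff.comp hu

lemma contFi (hu : ContDiff ℝ (⊤ : ℕ∞) u) (i : Fin 3) :
    ContDiff ℝ (⊤ : ℕ∞) (fun x => fderiv ℝ u x (e3 i)) :=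
  ((hu.fderiv_right (m := (⊤ : ℕ∞)) (by simp)).clm_apply contDiff_const)

lemma contp (hu : ContDiff ℝ (⊤ : ℕ∞) u) (i j : Fin 3) : ContDiff ℝ (⊤ : ℕ∞) (pc u i j) :=
  (EuclideanSpace.proj j : E3 →L[ℝ] ℝ).contDiff.comp (contFi hu i)

lemma contq (hu : ContDiff ℝ (⊤ : ℕ∞) u) : ContDiff ℝ (⊤ : ℕ∞) (qf u) :=
  ContDiff.sum fun j _ => (contU hu j).mul (contU hu j)

lemma contS (hu : ContDiff ℝ (⊤ : ℕ∞) u) (i : Fin 3) : ContDiff ℝ (⊤ : ℕ∞) (Sf u i) :=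
  ContDiff.sum fun j _ => (contU hu j).mul (contp hu i j)

lemma contpsi (hu : ContDiff ℝ (⊤ : ℕ∞) u) (i : Fin 3) : ContDiff ℝ (⊤ : ℕ∞) (psif u i) :=
  (contq hu).mul (contS hu i)

lemma fderiv_mul_apply' {f g : E3 → ℝ} {x : E3} (hf : DifferentiableAt ℝ f x)
    (hg : DifferentiableAt ℝ g x) (v : E3) :
    fderiv ℝ (fun y => f y * g y) x v
      = fderiv ℝ f x v * g x + f x * fderiv ℝ g x v := by
  rw [fderiv_fun_mul hf hg]
  simp only [ContinuousLinearMap.add_apply, ContinuousLinearMap.coe_smul',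
    Pi.smul_apply, smul_eq_mul]
  ring

lemma fderiv_sum_apply' (f : Fin 3 → E3 → ℝ) {x : E3}
    (hf : ∀ j, DifferentiableAt ℝ (f j) x) (v : E3) :
    fderiv ℝ (fun y => ∑ j, f j y) x v = ∑ j, fderiv ℝ (f j) x v := by
  rw [fderiv_fun_sum fun j _ => hf j]
  simp

lemma dU (hu : ContDiff ℝ (⊤ : ℕ∞) u) (j : Fin 3) (x : E3) (i : Fin 3) :
    fderiv ℝ (Uc u j) x (e3 i) = pc u i j x :=
  fderiv_comp_proj u ((hu.differentiable (by simp)) x) j (e3 i)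

lemma dq (hu : ContDiff ℝ (⊤ : ℕ∞) u) (x : E3) (i : Fin 3) :
    fderiv ℝ (qf u) x (e3 i) = 2 * Sf u i x := by
  have h := fderiv_sum_apply' (fun j => fun y => Uc u j y * Uc u j y)
    (fun j => ((contU hu j).differentiable (by simp) x).mul
      (((contU hu j).differentiable (by simp)) x)) (e3 i)
  have h2 : qf u = fun y => ∑ j, Uc u j y * Uc u j y := rfl
  rw [h2, h]
  have h3 : ∀ j : Fin 3, fderiv ℝ (fun y => Uc u j y * Uc u j y) x (e3 i)
      = 2 * (u x j * pc u i j x) := by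
    intro j
    rw [fderiv_mul_apply' ((contU hu j).differentiable (by simp) x)
      ((contU hu j).differentiable (by simp) x), dU hu]
    show pc u i j x * u x j + u x j * pc u i j x = _
    ring
  rw [Finset.sum_congr rfl fun j _ => h3 j, ← Finset.mul_sum]
  rfl

lemma dS (hu : ContDiff ℝ (⊤ : ℕ∞) u) (x : E3) (i : Fin 3) :
    fderiv ℝ (Sf u i) x (e3 i)
      = (∑ j, pc u i j x * pc u i j x)
        + ∑ j, u x j * fderiv ℝ (pc u i j) x (e3 i) := by
  have h := fderiv_sum_apply' (fun j => fun y => Uc u j y * pc u i j y)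
    (fun j => ((contU hu j).differentiable (by simp) x).mul
      (((contp hu i j).differentiable (by simp)) x)) (e3 i)
  have h2 : Sf u i = fun y => ∑ j, Uc u j y * pc u i j y := rfl
  rw [h2, h]
  have h3 : ∀ j : Fin 3, fderiv ℝ (fun y => Uc u j y * pc u i j y) x (e3 i)
      = pc u i j x * pc u i j x + u x j * fderiv ℝ (pc u i j) x (e3 i) := by
    intro j
    rw [fderiv_mul_apply' ((contU hu j).differentiable (by simp) x)
      ((contp hu i j).differentiable (by simp) x), dU hu]
    rfl
  rw [Finset.sum_congr rfl fun j _ => h3 j, Finset.sum_add_distrib]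

lemma dpsi (hu : ContDiff ℝ (⊤ : ℕ∞) u) (x : E3) (i : Fin 3) :
    fderiv ℝ (psif u i) x (e3 i)
      = 2 * Sf u i x * Sf u i x
        + qf u x * ((∑ j, pc u i j x * pc u i j x)
          + ∑ j, u x j * fderiv ℝ (pc u i j) x (e3 i)) := by
  have h2 : psif u i = fun y => qf u y * Sf u i y := rfl
  rw [h2, fderiv_mul_apply' ((contq hu).differentiable (by simp) x)
    ((contS hu i).differentiable (by simp) x), dq hu, dS hu]

lemma lap_comp (hu : ContDiff ℝ (⊤ : ℕ∞) u) (x : E3) (j : Fin 3) :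
    lap u x j = ∑ i, fderiv ℝ (pc u i j) x (e3 i) := by
  have h0 : lap u x j = (EuclideanSpace.proj j : E3 →L[ℝ] ℝ) (lap u x) := rfl
  rw [h0, lap, map_sum]
  refine Finset.sum_congr rfl fun i _ => ?_
  have h1 := fderiv_comp_proj (fun y => fderiv ℝ u y (e3 i))
    (((contFi hu i).differentiable (by simp)) x) j (e3 i)
  calc (EuclideanSpace.proj j) (fderiv ℝ (fun y => fderiv ℝ u y (e3 i)) x (e3 i))
      = (fderiv ℝ (fun y => fderiv ℝ u y (e3 i)) x (e3 i)) j := rfl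
    _ = fderiv ℝ (fun y => fderiv ℝ u y (e3 i) j) x (e3 i) := h1.symm
    _ = fderiv ℝ (pc u i j) x (e3 i) := rfl

lemma pointwise_div (hu : ContDiff ℝ (⊤ : ℕ∞) u) (x : E3) :
    ∑ i, fderiv ℝ (psif u i) x (e3 i)
      = gradNormSq u x * qf u x + (1/2) * gradNormSqScalar (qf u) x
        + qf u x * ∑ j, u x j * lap u x j := by
  rw [Finset.sum_congr rfl fun i _ => dpsi hu x i]
  have hg : gradNormSq u x = ∑ i, ∑ j, pc u i j x * pc u i j x := by
    simp [gradNormSq, pc, sq]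
  have hgs : gradNormSqScalar (qf u) x = ∑ i, (2 * Sf u i x) * (2 * Sf u i x) := by
    simp only [gradNormSqScalar]
    exact Finset.sum_congr rfl fun i _ => by rw [dq hu]; ring
  have hl : (∑ j, u x j * lap u x j)
      = ∑ j, u x j * ∑ i, fderiv ℝ (pc u i j) x (e3 i) :=
    Finset.sum_congr rfl fun j _ => by rw [lap_comp hu]
  rw [hg, hgs, hl]
  have e1 : (∑ i, ∑ j, pc u i j x * pc u i j x) * qf u x
      = ∑ i, qf u x * ∑ j, pc u i j x * pc u i j x := by
    rw [Finset.sum_mul]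
    exact Finset.sum_congr rfl fun i _ => by ring
  have e2 : (1/2 : ℝ) * ∑ i, (2 * Sf u i x) * (2 * Sf u i x)
      = ∑ i, 2 * Sf u i x * Sf u i x := by
    rw [Finset.mul_sum]
    exact Finset.sum_congr rfl fun i _ => by ring
  have e3' : qf u x * ∑ j, u x j * ∑ i, fderiv ℝ (pc u i j) x (e3 i)
      = ∑ i, qf u x * ∑ j, u x j * fderiv ℝ (pc u i j) x (e3 i) := by
    simp only [Finset.mul_sum]
    exact Finset.sum_comm ..
  rw [e1, e2, e3', ← Finset.sum_add_distrib, ← Finset.sum_add_distrib]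
  exact Finset.sum_congr rfl fun i _ => by rw [mul_add]; ring

lemma young_aux {s A B c : ℝ} (hc : 0 < c) (hs : s^2 ≤ A*B) (hA : 0 ≤ A) (hB : 0 ≤ B) :
    s ≤ c*A + (1/(4*c))*B := by
  have ht : 0 < 1/(4*c) := by positivity
  set t := 1/(4*c) with hT
  have h4 : 4*c*t = 1 := by rw [hT]; field_simp
  have hRnn : 0 ≤ c*A + t*B := add_nonneg (mul_nonneg hc.le hA) (mul_nonneg ht.le hB)
  have hkey : (c*A + t*B)^2 = (c*A - t*B)^2 + (4*c*t)*(A*B) := by ring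
  rw [h4, one_mul] at hkey
  have hs2 : s^2 ≤ (c*A + t*B)^2 := by nlinarith [sq_nonneg (c*A - t*B)]
  nlinarith [hs2, hRnn]

lemma per_psi {L : ℝ} (hu : ContDiff ℝ (⊤ : ℕ∞) u) (hup : Periodic3 L u) (i : Fin 3) :
    Periodic3 L (psif u i) := by
  intro x k
  have h1 : u (x + L • e3 k) = u x := hup x k
  have h2 : fderiv ℝ u (x + L • e3 k) = fderiv ℝ u x :=
    fderiv_translate u (hu.differentiable (by simp)) _ (fun y => hup y k) x
  simp [psif, qf, Sf, pc, h1, h2]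

lemma cont_pc (hu : ContDiff ℝ (⊤ : ℕ∞) u) (i j : Fin 3) : Continuous (pc u i j) :=
  (contp hu i j).continuous

lemma cont_gns (hu : ContDiff ℝ (⊤ : ℕ∞) u) : Continuous (gradNormSq u) := by
  apply continuous_finset_sum _ fun i _ => ?_
  exact continuous_finset_sum _ fun j _ => ((cont_pc hu i j).pow 2)

lemma cont_lap (hu : ContDiff ℝ (⊤ : ℕ∞) u) : Continuous (lap u) := by
  apply continuous_finset_sum _ fun i _ => ?_
  exact (((contFi hu i).fderiv_right (m := (⊤ : ℕ∞)) (by simp)).continuous).clm_apply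
    continuous_const

lemma cont_lapj (hu : ContDiff ℝ (⊤ : ℕ∞) u) (j : Fin 3) :
    Continuous fun x => lap u x j :=
  (EuclideanSpace.proj j : E3 →L[ℝ] ℝ).continuous.comp (cont_lap hu)

lemma cont_gnss_q (hu : ContDiff ℝ (⊤ : ℕ∞) u) : Continuous (gradNormSqScalar (qf u)) := by
  apply continuous_finset_sum _ fun i _ => ?_
  exact ((((contq hu).fderiv_right (m := (⊤ : ℕ∞)) (by simp)).continuous).clm_apply
    continuous_const).pow 2

lemma norm_sq_eq (v : E3) : ‖v‖ ^ 2 = ∑ j, v j * v j := by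
  rw [EuclideanSpace.norm_eq, Real.sq_sqrt (by positivity)]
  exact Finset.sum_congr rfl fun j _ => by
    rw [Real.norm_eq_abs, sq_abs, sq]

lemma norm_sq_eq' (v : E3) : ‖v‖ ^ 2 = ∑ j, (v j) ^ 2 := by
  rw [norm_sq_eq]
  exact Finset.sum_congr rfl fun j _ => (pow_two (v j)).symm

lemma norm_rpow_two (v : E3) : ‖v‖ ^ ((3:ℝ) - 1) = ∑ j, v j * v j := by
  have h : ((3:ℝ) - 1) = ((2:ℕ) : ℝ) := by norm_num
  rw [h, Real.rpow_natCast, norm_sq_eq]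

lemma qf_nonneg (x : E3) : 0 ≤ qf u x :=
  Finset.sum_nonneg fun j _ => mul_self_nonneg _

lemma gns_nonneg (x : E3) : 0 ≤ gradNormSq u x :=
  Finset.sum_nonneg fun i _ => Finset.sum_nonneg fun j _ => sq_nonneg _

/-! ### Main integral identities and bounds -/

lemma pairCA_eq {L : ℝ} (hL : 0 < L) (hu : ContDiff ℝ (⊤ : ℕ∞) u)
    (hup : Periodic3 L u) :
    pairCA L 3 u = (∫ x in box L, gradNormSq u x * qf u x)
      + (1/2) * ∫ x in box L, gradNormSqScalar (qf u) x := by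
  have hzero := integral_deriv_sum_zero L hL (fun i => psif u i)
    (fun i => contpsi hu i) (fun i => per_psi hu hup i)
  simp only [pointwise_div hu] at hzero
  have int1 : IntegrableOn (fun x => gradNormSq u x * qf u x) (box L) :=
    cont_integrableOn ((cont_gns hu).mul (contq hu).continuous)
  have int2 : IntegrableOn (fun x => (1/2 : ℝ) * gradNormSqScalar (qf u) x) (box L) :=
    cont_integrableOn (continuous_const.mul (cont_gnss_q hu))
  have int3 : IntegrableOn (fun x => qf u x * ∑ j, u x j * lap u x j) (box L) := by
    apply cont_integrableOn
    apply (contq hu).continuous.mul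
    apply continuous_finset_sum _ fun j _ => ?_
    exact ((contU hu j).continuous).mul (cont_lapj hu j)
  have int12 : IntegrableOn (fun x => gradNormSq u x * qf u x
      + (1/2 : ℝ) * gradNormSqScalar (qf u) x) (box L) := int1.add int2
  rw [MeasureTheory.integral_add int12 int3,
    MeasureTheory.integral_add int1 int2, MeasureTheory.integral_const_mul] at hzero
  have hpt : ∀ x : E3, (∑ j, (‖u x‖ ^ ((3:ℝ) - 1) * u x j) * (-(lap u x)) j)
      = -(qf u x * ∑ j, u x j * lap u x j) := by
    intro x
    have hq : ‖u x‖ ^ ((3:ℝ) - 1) = qf u x := norm_rpow_two (u x)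
    calc ∑ j, (‖u x‖ ^ ((3:ℝ) - 1) * u x j) * (-(lap u x)) j
        = ∑ j, -(qf u x * (u x j * lap u x j)) := Finset.sum_congr rfl fun j _ => by
          rw [hq]
          show (qf u x * u x j) * (-(lap u x j)) = _
          ring
      _ = -(∑ j, qf u x * (u x j * lap u x j)) := by rw [Finset.sum_neg_distrib]
      _ = -(qf u x * ∑ j, u x j * lap u x j) := by rw [Finset.mul_sum]
  have hCA : pairCA L 3 u = ∫ x in box L, -(qf u x * ∑ j, u x j * lap u x j) := by
    rw [pairCA]
    exact integral_congr_ae (Filter.Eventually.of_forall fun x => hpt x)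
  rw [hCA, MeasureTheory.integral_neg]
  linarith [hzero]

lemma pairBA_bound {L β : ℝ} (hu : ContDiff ℝ (⊤ : ℕ∞) u) (hβ : 0 < β) :
    -pairBA L u ≤ (1/(4*β)) * AuSq L u
      + β * ∫ x in box L, gradNormSq u x * qf u x := by
  have hBA : -pairBA L u = ∫ x in box L, ∑ j, conv u x j * lap u x j := by
    rw [pairBA, ← MeasureTheory.integral_neg]
    apply integral_congr_ae
    filter_upwards with x
    rw [← Finset.sum_neg_distrib]
    exact Finset.sum_congr rfl fun j _ => by
      show -(conv u x j * (-(lap u x j))) = _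
      ring
  have hpt : ∀ x : E3, (∑ j, conv u x j * lap u x j)
      ≤ β * (gradNormSq u x * qf u x) + (1/(4*β)) * ‖lap u x‖ ^ 2 := by
    intro x
    have h1 : (∑ j, conv u x j * lap u x j)^2
        ≤ (∑ j, (conv u x j)^2) * (∑ j, (lap u x j)^2) :=
      Finset.sum_mul_sq_le_sq_mul_sq _ _ _
    have h2 : (∑ j, (conv u x j)^2) ≤ qf u x * gradNormSq u x := by
      have hstep : ∀ j : Fin 3, (conv u x j)^2
          ≤ (∑ i, (u x i)^2) * (∑ i, (fderiv ℝ u x (e3 i) j)^2) :=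
        fun j => Finset.sum_mul_sq_le_sq_mul_sq _ _ _
      calc (∑ j, (conv u x j)^2)
          ≤ ∑ j, (∑ i, (u x i)^2) * (∑ i, (fderiv ℝ u x (e3 i) j)^2) :=
            Finset.sum_le_sum fun j _ => hstep j
        _ = (∑ i, (u x i)^2) * ∑ j, ∑ i, (fderiv ℝ u x (e3 i) j)^2 := by
            rw [Finset.mul_sum]
        _ = qf u x * gradNormSq u x := by
            rw [Finset.sum_comm]
            congr 1
            exact Finset.sum_congr rfl fun i _ => by rw [sq]
    have h3 : (∑ j, (lap u x j)^2) = ‖lap u x‖ ^ 2 := (norm_sq_eq' (lap u x)).symm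
    have hsq : (∑ j, conv u x j * lap u x j)^2
        ≤ (gradNormSq u x * qf u x) * ‖lap u x‖ ^ 2 := by
      calc (∑ j, conv u x j * lap u x j)^2
          ≤ (∑ j, (conv u x j)^2) * (∑ j, (lap u x j)^2) := h1
        _ ≤ (qf u x * gradNormSq u x) * (∑ j, (lap u x j)^2) := by
            apply mul_le_mul_of_nonneg_right h2
            exact Finset.sum_nonneg fun j _ => sq_nonneg _
        _ = (gradNormSq u x * qf u x) * ‖lap u x‖ ^ 2 := by rw [h3, mul_comm (qf u x)]
    exact young_aux hβ hsq (mul_nonneg (gns_nonneg x) (qf_nonneg x)) (sq_nonneg _)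
  have hcontL : Continuous fun x => ∑ j, conv u x j * lap u x j := by
    apply continuous_finset_sum _ fun j _ => ?_
    apply Continuous.mul ?_ (cont_lapj hu j)
    apply continuous_finset_sum _ fun i _ => ?_
    exact ((EuclideanSpace.proj i : E3 →L[ℝ] ℝ).continuous.comp hu.continuous).mul
      (cont_pc hu i j)
  have hcontR : Continuous fun x => β * (gradNormSq u x * qf u x)
      + (1/(4*β)) * ‖lap u x‖ ^ 2 := by
    apply Continuous.add
    · exact continuous_const.mul ((cont_gns hu).mul (contq hu).continuous)
    · exact continuous_const.mul ((cont_lap hu).norm.pow 2)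
  have hmono := setIntegral_mono_on (cont_integrableOn hcontL) (cont_integrableOn hcontR)
    (box_meas L) (fun x _ => hpt x)
  rw [hBA]
  refine hmono.trans (le_of_eq ?_)
  rw [MeasureTheory.integral_add
    (cont_integrableOn (g := fun x => β * (gradNormSq u x * qf u x)) (continuous_const.mul ((cont_gns hu).mul (contq hu).continuous)))
    (cont_integrableOn (g := fun x => (1/(4*β)) * ‖lap u x‖ ^ 2) (continuous_const.mul ((cont_lap hu).norm.pow 2))),
    MeasureTheory.integral_const_mul, MeasureTheory.integral_const_mul]
  rw [AuSq]
  ring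

lemma pairFA_bound {L μ : ℝ} {f : E3 → E3} (hu : ContDiff ℝ (⊤ : ℕ∞) u)
    (hf : Continuous f) (hμ : 0 < μ) :
    pairFA L f u ≤ (μ/2) * AuSq L u + (1/(2*μ)) * HSq L f := by
  have hc : (0:ℝ) < 1/(2*μ) := by positivity
  have hcc : 1/(4*(1/(2*μ))) = μ/2 := by field_simp; ring
  have hpt : ∀ x : E3, (∑ j, f x j * (-(lap u x)) j)
      ≤ (1/(2*μ)) * ‖f x‖ ^ 2 + (μ/2) * ‖lap u x‖ ^ 2 := by
    intro x
    have h1 : (∑ j, f x j * (-(lap u x)) j)^2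
        ≤ (∑ j, (f x j)^2) * (∑ j, ((-(lap u x)) j)^2) :=
      Finset.sum_mul_sq_le_sq_mul_sq _ _ _
    have h2 : (∑ j, ((-(lap u x)) j)^2) = ‖lap u x‖ ^ 2 := by
      rw [norm_sq_eq' (lap u x)]
      exact Finset.sum_congr rfl fun j _ => by
        show (-(lap u x j))^2 = lap u x j ^ 2
        rw [neg_sq]
    have hsq : (∑ j, f x j * (-(lap u x)) j)^2 ≤ ‖f x‖ ^ 2 * ‖lap u x‖ ^ 2 := by
      rw [norm_sq_eq' (f x), ← h2]
      exact h1
    have := young_aux hc hsq (sq_nonneg ‖f x‖) (sq_nonneg ‖lap u x‖)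
    rw [hcc] at this
    linarith
  have hcontL : Continuous fun x => ∑ j, f x j * (-(lap u x)) j := by
    apply continuous_finset_sum _ fun j _ => ?_
    refine ((EuclideanSpace.proj j : E3 →L[ℝ] ℝ).continuous.comp hf).mul ?_
    exact (EuclideanSpace.proj j : E3 →L[ℝ] ℝ).continuous.comp (cont_lap hu).neg
  have hcontR : Continuous fun x => (1/(2*μ)) * ‖f x‖ ^ 2 + (μ/2) * ‖lap u x‖ ^ 2 :=
    (continuous_const.mul (hf.norm.pow 2)).add
      (continuous_const.mul ((cont_lap hu).norm.pow 2))
  have hmono := setIntegral_mono_on (cont_integrableOn hcontL) (cont_integrableOn hcontR)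
    (box_meas L) (fun x _ => hpt x)
  rw [pairFA]
  refine hmono.trans (le_of_eq ?_)
  rw [MeasureTheory.integral_add
    (cont_integrableOn (g := fun x => (1/(2*μ)) * ‖f x‖ ^ 2) (continuous_const.mul (hf.norm.pow 2)))
    (cont_integrableOn (g := fun x => (μ/2) * ‖lap u x‖ ^ 2) (continuous_const.mul ((cont_lap hu).norm.pow 2))),
    MeasureTheory.integral_const_mul, MeasureTheory.integral_const_mul]
  rw [AuSq, HSq]
  ring

end Aux

/-- For `r = 3` with `2βμ ≥ 1`, along the weak solution `u` of the 3D CBF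
equations with `f ∈ H` (taking the `H`-inner product of the equation with `Au` gives
`(1/2) d/dt‖u‖_V² = (f,Au) - μ‖Au‖_H² - (B(u),Au) - β(C(u),Au)`), one has
`d/dt‖u(t)‖_V² + (μ - 1/(2β))‖Au‖_H² + β‖∇|u|²‖_{L²}² ≤ (1/μ)‖f‖_H²`. -/
theorem stmt16 (L β μ : ℝ) (hL : 0 < L) (hβ : 0 < β) (hμ : 0 < μ)
    (hcrit : 1 ≤ 2 * β * μ)
    (u : ℝ → E3 → E3) (f : E3 → E3)
    (hf : Continuous f) (hfp : Periodic3 L f)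
    (hu : ∀ t, ContDiff ℝ (⊤ : ℕ∞) (u t))
    (hup : ∀ t, Periodic3 L (u t))
    (hud : ∀ t, divFree (u t))
    (hder : ∀ t : ℝ, HasDerivAt (fun s => VnormSq L (u s))
      (2 * (pairFA L f (u t) - μ * AuSq L (u t) - pairBA L (u t)
        - β * pairCA L 3 (u t))) t) :
    ∀ t : ℝ, ∃ d : ℝ, HasDerivAt (fun s => VnormSq L (u s)) d t ∧
      d + (μ - 1 / (2 * β)) * AuSq L (u t)
          + β * (∫ x in box L, gradNormSqScalar (fun y => ‖u t y‖ ^ 2) x)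
        ≤ (1 / μ) * HSq L f := by
  intro t
  refine ⟨_, hder t, ?_⟩
  have hqeq : (fun y => ‖u t y‖ ^ 2) = qf (u t) := funext fun y => norm_sq_eq (u t y)
  rw [hqeq]
  have hCA := pairCA_eq hL (hu t) (hup t)
  have hBA := pairBA_bound (L := L) (u := u t) (hu t) hβ
  have hFA := pairFA_bound (L := L) (u := u t) (f := f) (hu t) hf hμ
  set A := AuSq L (u t)
  set C1 := ∫ x in box L, gradNormSq (u t) x * qf (u t) x
  set C2 := ∫ x in box L, gradNormSqScalar (qf (u t)) x
  rw [hCA]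
  have hrelA : (1/(2*β)) * A = 2 * ((1/(4*β)) * A) := by
    have : (1:ℝ)/(2*β) = 2 * (1/(4*β)) := by field_simp; ring
    rw [this]; ring
  have hrelH : (1/μ) * HSq L f = 2 * ((1/(2*μ)) * HSq L f) := by
    have : (1:ℝ)/μ = 2 * (1/(2*μ)) := by field_simp
    rw [this]; ring
  nlinarith [hBA, hFA]
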